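/- Let X ∈ ℝ^{n×m}, y ∈ ℝ^n, Z ∈ ℝ^{n×k}, and κ < 1 + λ_min((X^T M_Z X)^{-1} X^T P_Z X), where M_Z X has full column rank. Then the function β ↦ κ‖P_Z(y − Xβ)‖² + (1−κ)‖y − Xβ‖² is strictly convex on ℝ^m, and its unique minimizer is β̂_k(κ) = (X^T(κP_Z + (1−κ)Id)X)^{-1} X^T(κP_Z + (1−κ)Id)y. -/

import Mathlib

open Matrix

private lemma dp_self_nonneg {a : ℕ} (v : Fin a → ℝ) : 0 ≤ v ⬝ᵥ v :=
  Finset.sum_nonneg fun i _ => mul_self_nonneg _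

private lemma adj_dot {a b : ℕ} (M : Matrix (Fin a) (Fin b) ℝ) (u : Fin b → ℝ) (x : Fin a → ℝ) :
    (M *ᵥ u) ⬝ᵥ x = u ⬝ᵥ (Mᵀ *ᵥ x) := by
  rw [dotProduct_comm, dotProduct_mulVec, ← mulVec_transpose, dotProduct_comm]

private lemma inj_of_rank {n m : ℕ} (M : Matrix (Fin n) (Fin m) ℝ) (h : M.rank = m)
    (v : Fin m → ℝ) (hv : M *ᵥ v = 0) : v = 0 := by
  have h2 := LinearMap.finrank_range_add_finrank_ker M.mulVecLin
  rw [Matrix.rank] at h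
  rw [h] at h2
  simp only [Module.finrank_pi, Fintype.card_fin] at h2
  have hker : Module.finrank ℝ (LinearMap.ker M.mulVecLin) = 0 := by omega
  have : LinearMap.ker M.mulVecLin = ⊥ := Submodule.finrank_eq_zero.mp hker
  have := LinearMap.ker_eq_bot.mp this
  exact this (a₂ := 0) (by simpa using hv)

private lemma strictconv {m : ℕ} (W : Matrix (Fin m) (Fin m) ℝ) (hWsym : Wᵀ = W)
    (hWpos : ∀ v : Fin m → ℝ, v ≠ 0 → 0 < v ⬝ᵥ W *ᵥ v)
    (f : (Fin m → ℝ) → ℝ) (βh : Fin m → ℝ) (c : ℝ)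
    (hfq : ∀ β, f β = (β - βh) ⬝ᵥ W *ᵥ (β - βh) + c) :
    StrictConvexOn ℝ (Set.univ : Set (Fin m → ℝ)) f ∧ ∀ β, β ≠ βh → f βh < f β := by
  have hsymm : ∀ u v : Fin m → ℝ, u ⬝ᵥ W *ᵥ v = v ⬝ᵥ W *ᵥ u := by
    intro u v
    rw [dotProduct_comm, adj_dot, hWsym]
  have hexp : ∀ (a b : ℝ) (u v : Fin m → ℝ),
      (a • u + b • v) ⬝ᵥ W *ᵥ (a • u + b • v)
        = a^2 * (u ⬝ᵥ W *ᵥ u) + 2*a*b*(u ⬝ᵥ W *ᵥ v) + b^2 * (v ⬝ᵥ W *ᵥ v) := by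
    intro a b u v
    have h1 := hsymm u v
    simp only [mulVec_add, mulVec_smul, dotProduct_add, add_dotProduct,
      dotProduct_smul, smul_dotProduct, smul_eq_mul]
    rw [h1]; ring
  have hexp2 : ∀ (u v : Fin m → ℝ),
      (u - v) ⬝ᵥ W *ᵥ (u - v)
        = (u ⬝ᵥ W *ᵥ u) - 2*(u ⬝ᵥ W *ᵥ v) + (v ⬝ᵥ W *ᵥ v) := by
    intro u v
    have h1 := hsymm u v
    simp only [mulVec_sub, dotProduct_sub, sub_dotProduct]
    rw [h1]; ring
  constructor
  · refine ⟨convex_univ, ?_⟩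
    intro x _ y _ hxy a b ha hb hab
    have hb1 : b = 1 - a := by linarith
    subst hb1
    set u := x - βh with hu
    set v := y - βh with hv
    have hcomb : a • x + (1-a) • y - βh = a • u + (1-a) • v := by
      ext i; simp [hu, hv]; ring
    have hQ2 : 0 < (u - v) ⬝ᵥ W *ᵥ (u - v) := by
      apply hWpos
      have : u - v = x - y := by ext i; simp [hu, hv]
      rw [this]
      exact sub_ne_zero.mpr hxy
    have e1 := hexp a (1-a) u v
    have e2 := hexp2 u v
    have key : a * f x + (1-a) * f y - f (a • x + (1-a) • y)
        = a*(1-a)*((u - v) ⬝ᵥ W *ᵥ (u - v)) := by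
      rw [hfq, hfq, hfq, hcomb]
      rw [show x - βh = u from rfl, show y - βh = v from rfl]
      linear_combination (-1 : ℝ) * e1 - (a*(1-a)) * e2
    have hpos : 0 < a*(1-a)*((u - v) ⬝ᵥ W *ᵥ (u - v)) :=
      mul_pos (mul_pos ha hb) hQ2
    have := key ▸ hpos
    simp only [smul_eq_mul]
    linarith
  · intro β hβ
    have h1 := hfq β
    have h2 := hfq βh
    rw [sub_self] at h2
    simp only [zero_dotProduct] at h2
    have := hWpos (β - βh) (sub_ne_zero.mpr hβ)
    rw [h1, h2]
    linarith

private lemma quad_expand {n m : ℕ} (A : Matrix (Fin n) (Fin n) ℝ) (hAsy : Aᵀ = A)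
    (X : Matrix (Fin n) (Fin m) ℝ) (y : Fin n → ℝ) (βh β : Fin m → ℝ)
    (hnorm : (Xᵀ * A * X) *ᵥ βh = (Xᵀ * A) *ᵥ y) :
    (y - X *ᵥ β) ⬝ᵥ A *ᵥ (y - X *ᵥ β)
      = (β - βh) ⬝ᵥ (Xᵀ * A * X) *ᵥ (β - βh)
        + (y - X *ᵥ βh) ⬝ᵥ A *ᵥ (y - X *ᵥ βh) := by
  have hm : ∀ u : Fin m → ℝ, (Xᵀ * A * X) *ᵥ u = (Xᵀ * A) *ᵥ (X *ᵥ u) := by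
    intro u; rw [← mulVec_mulVec]
  have i1 : ∀ (u : Fin m → ℝ) (w : Fin n → ℝ),
      (X *ᵥ u) ⬝ᵥ (A *ᵥ w) = u ⬝ᵥ ((Xᵀ * A) *ᵥ w) := by
    intro u w; rw [adj_dot, mulVec_mulVec]
  have isym : ∀ (w w' : Fin n → ℝ), w ⬝ᵥ A *ᵥ w' = w' ⬝ᵥ A *ᵥ w := by
    intro w w'; rw [dotProduct_comm, adj_dot, hAsy]
  have hc : ∀ u : Fin m → ℝ,
      u ⬝ᵥ ((Xᵀ * A) *ᵥ (X *ᵥ βh)) = u ⬝ᵥ ((Xᵀ * A) *ᵥ y) := by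
    intro u; rw [mulVec_mulVec, hnorm]
  have hcross : βh ⬝ᵥ ((Xᵀ * A) *ᵥ (X *ᵥ β)) = β ⬝ᵥ ((Xᵀ * A) *ᵥ (X *ᵥ βh)) := by
    rw [← i1, ← i1, isym]
  simp only [mulVec_sub, dotProduct_sub, sub_dotProduct, hm]
  rw [isym y (X *ᵥ β), isym y (X *ᵥ βh)]
  simp only [i1]
  rw [hcross, hc β, hc βh]
  ring

private lemma rayleigh {m : ℕ} {B C : Matrix (Fin m) (Fin m) ℝ} (hB : B.PosDef)
    (hC : C.PosSemidef) (lam : ℝ)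
    (hMin : ∀ (w : Fin m → ℝ), w ≠ 0 → ∀ μ : ℝ, (B⁻¹ * C) *ᵥ w = μ • w → lam ≤ μ) :
    ∀ v : Fin m → ℝ, lam * (v ⬝ᵥ B *ᵥ v) ≤ v ⬝ᵥ C *ᵥ v := by
  have hR : ∃ R : Matrix (Fin m) (Fin m) ℝ, R * R = B ∧ R.IsHermitian := by
    open scoped MatrixOrder in
    exact ⟨CFC.sqrt B, CFC.sqrt_mul_sqrt_self B hB.posSemidef.nonneg,
      (CFC.sqrt_nonneg B).posSemidef.1⟩
  obtain ⟨R, hRR, hRH⟩ := hR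
  have hRt : Rᵀ = R := hRH
  have hRdet : IsUnit R.det := by
    have h1 : R.det * R.det = B.det := by rw [← det_mul, hRR]
    have h2 : B.det ≠ 0 := ne_of_gt hB.det_pos
    have : R.det ≠ 0 := fun h => h2 (by rw [← h1, h, mul_zero])
    exact this.isUnit
  have hRiR : R⁻¹ * R = 1 := nonsing_inv_mul R hRdet
  have hRRi : R * R⁻¹ = 1 := mul_nonsing_inv R hRdet
  have hRiH : R⁻¹.IsHermitian := hRH.inv
  set S := R⁻¹ * C * R⁻¹ with hSdef
  have hSH : S.IsHermitian := by
    unfold Matrix.IsHermitian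
    rw [hSdef, conjTranspose_mul, conjTranspose_mul, hRiH.eq, hC.1.eq, mul_assoc]
  set T := S - lam • (1 : Matrix (Fin m) (Fin m) ℝ) with hTdef
  have hTH : T.IsHermitian := by
    apply hSH.sub
    unfold Matrix.IsHermitian
    rw [conjTranspose_smul, conjTranspose_one, star_trivial]
  have hBinv : B⁻¹ = R⁻¹ * R⁻¹ := by rw [← hRR, Matrix.mul_inv_rev]
  have heig : ∀ i, 0 ≤ hTH.eigenvalues i := by
    intro i
    set ν := hTH.eigenvalues i with hν
    set u : Fin m → ℝ := ⇑(hTH.eigenvectorBasis i) with hudef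
    have hu : T *ᵥ u = ν • u := hTH.mulVec_eigenvectorBasis i
    have hu0 : u ≠ 0 := by
      have h := hTH.eigenvectorBasis.orthonormal.ne_zero i
      intro hc0
      exact h (by ext j; exact congrFun hc0 j)
    have hSu : S *ᵥ u = (ν + lam) • u := by
      have hT : T *ᵥ u = S *ᵥ u - lam • u := by
        rw [hTdef, sub_mulVec, smul_mulVec, one_mulVec]
      rw [hT] at hu
      rw [add_smul, ← hu]
      abel
    set w := R⁻¹ *ᵥ u with hwdef
    have hw0 : w ≠ 0 := by
      intro h
      apply hu0
      have : R *ᵥ w = u := by rw [hwdef, mulVec_mulVec, hRRi, one_mulVec]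
      rw [h, mulVec_zero] at this
      exact this.symm
    have hkey : (B⁻¹ * C) *ᵥ w = (ν + lam) • w := by
      have : (B⁻¹ * C) *ᵥ w = R⁻¹ *ᵥ (S *ᵥ u) := by
        rw [hwdef, hBinv, hSdef, mulVec_mulVec, mulVec_mulVec]
        noncomm_ring
      rw [this, hSu, mulVec_smul, hwdef]
    have := hMin w hw0 (ν + lam) hkey
    linarith
  have hTpsd : T.PosSemidef := hTH.posSemidef_iff_eigenvalues_nonneg.mpr heig
  intro v
  set u := R *ᵥ v with hudef
  have h0 : 0 ≤ u ⬝ᵥ T *ᵥ u := by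
    have := hTpsd.dotProduct_mulVec_nonneg u
    simpa using this
  have hSu : u ⬝ᵥ S *ᵥ u = v ⬝ᵥ C *ᵥ v := by
    have h1 : S *ᵥ u = R⁻¹ *ᵥ (C *ᵥ v) := by
      rw [hudef, hSdef, mulVec_mulVec, mulVec_mulVec, mul_assoc, mul_assoc, hRiR, mul_one,
        ← mulVec_mulVec]
    rw [h1, hudef, adj_dot, hRt, mulVec_mulVec, hRRi, one_mulVec]
  have huu : u ⬝ᵥ u = v ⬝ᵥ B *ᵥ v := by
    rw [hudef, adj_dot, hRt, mulVec_mulVec, hRR]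
  have hT : u ⬝ᵥ T *ᵥ u = u ⬝ᵥ S *ᵥ u - lam * (u ⬝ᵥ u) := by
    rw [hTdef, sub_mulVec, dotProduct_sub, smul_mulVec, one_mulVec, dotProduct_smul,
      smul_eq_mul]
  rw [hT, hSu, huu] at h0
  linarith

theorem stmt_1 {n m k : ℕ}
    (y : Fin n → ℝ) (X : Matrix (Fin n) (Fin m) ℝ) (Z : Matrix (Fin n) (Fin k) ℝ)
    (P : Matrix (Fin n) (Fin n) ℝ)
    (hPsymm : P.IsSymm) (hPidem : P * P = P) (hPZ : P * Z = Z)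
    (hPrange : ∃ C : Matrix (Fin k) (Fin n) ℝ, P = Z * C)
    (hrank : ((1 - P) * X).rank = m)
    (lam : ℝ)
    (hEig : ∃ v : Fin m → ℝ, v ≠ 0 ∧
      ((Xᵀ * (1 - P) * X)⁻¹ * (Xᵀ * P * X)) *ᵥ v = lam • v)
    (hMin : ∀ μ : ℝ, (∃ v : Fin m → ℝ, v ≠ 0 ∧
      ((Xᵀ * (1 - P) * X)⁻¹ * (Xᵀ * P * X)) *ᵥ v = μ • v) → lam ≤ μ)
    (κ : ℝ) (hκ : κ < 1 + lam)
    (f : (Fin m → ℝ) → ℝ)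
    (hf : f = fun β => κ * ((P *ᵥ (y - X *ᵥ β)) ⬝ᵥ (P *ᵥ (y - X *ᵥ β)))
            + (1 - κ) * ((y - X *ᵥ β) ⬝ᵥ (y - X *ᵥ β)))
    (βhat : Fin m → ℝ)
    (hβhat : βhat = ((Xᵀ * (κ • P + (1 - κ) • (1 : Matrix (Fin n) (Fin n) ℝ)) * X)⁻¹ *
        (Xᵀ * (κ • P + (1 - κ) • (1 : Matrix (Fin n) (Fin n) ℝ)))) *ᵥ y) :
    StrictConvexOn ℝ Set.univ f ∧ ∀ β : Fin m → ℝ, β ≠ βhat → f βhat < f β := by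
  have hPt : Pᵀ = P := hPsymm
  -- B is positive definite
  set B : Matrix (Fin m) (Fin m) ℝ := Xᵀ * (1 - P) * X with hBdef
  set C : Matrix (Fin m) (Fin m) ℝ := Xᵀ * P * X with hCdef
  set M : Matrix (Fin n) (Fin m) ℝ := (1 - P) * X with hMdef
  have hMt : Mᵀ = Xᵀ * (1 - P) := by
    rw [hMdef, transpose_mul, transpose_sub, transpose_one, hPt]
  have hMtM : Mᵀ * M = B := by
    rw [hMt, hMdef, hBdef]
    have h1 : (1 - P) * (1 - P) = 1 - P := by
      have h2 : (1 - P) * (1 - P) = 1 - P - P + P * P := by noncomm_ring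
      rw [h2, hPidem]
      abel
    rw [← Matrix.mul_assoc, Matrix.mul_assoc Xᵀ (1 - P) (1 - P), h1]
  have hBquad : ∀ v : Fin m → ℝ, v ⬝ᵥ B *ᵥ v = (M *ᵥ v) ⬝ᵥ (M *ᵥ v) := by
    intro v
    rw [← hMtM, ← mulVec_mulVec, ← adj_dot]
  have hBpd : B.PosDef := by
    refine Matrix.PosDef.of_dotProduct_mulVec_pos ?_ ?_
    · show Bᴴ = B
      rw [conjTranspose_eq_transpose_of_trivial, hBdef, transpose_mul, transpose_mul,
        transpose_transpose, transpose_sub, transpose_one, hPt, ← Matrix.mul_assoc]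
    · intro x hx
      have hstar : star x = x := by ext i; simp
      rw [hstar, hBquad]
      have hMx : M *ᵥ x ≠ 0 := fun h => hx (inj_of_rank M hrank x h)
      have h1 : 0 ≤ (M *ᵥ x) ⬝ᵥ (M *ᵥ x) := dp_self_nonneg _
      have h2 : (M *ᵥ x) ⬝ᵥ (M *ᵥ x) ≠ 0 := fun h => hMx (dotProduct_self_eq_zero.mp h)
      exact lt_of_le_of_ne h1 (Ne.symm h2)
  have hPtP : (P * X)ᵀ * (P * X) = C := by
    rw [transpose_mul, hPt, hCdef, ← Matrix.mul_assoc, Matrix.mul_assoc Xᵀ P P, hPidem]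
  have hCquad : ∀ v : Fin m → ℝ, v ⬝ᵥ C *ᵥ v = ((P * X) *ᵥ v) ⬝ᵥ ((P * X) *ᵥ v) := by
    intro v
    rw [← hPtP, ← mulVec_mulVec, ← adj_dot]
  have hCpsd : C.PosSemidef := by
    refine Matrix.PosSemidef.of_dotProduct_mulVec_nonneg ?_ ?_
    · show Cᴴ = C
      rw [conjTranspose_eq_transpose_of_trivial, hCdef, transpose_mul, transpose_mul,
        transpose_transpose, hPt, ← Matrix.mul_assoc]
    · intro x
      have hstar : star x = x := by ext i; simp
      rw [hstar, hCquad]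
      exact dp_self_nonneg _
  have hMin' : ∀ (w : Fin m → ℝ), w ≠ 0 → ∀ μ : ℝ, (B⁻¹ * C) *ᵥ w = μ • w → lam ≤ μ :=
    fun w hw μ h => hMin μ ⟨w, hw, h⟩
  have hRay := rayleigh hBpd hCpsd lam hMin'
  -- the weighting matrix
  set A : Matrix (Fin n) (Fin n) ℝ := κ • P + (1 - κ) • 1 with hAdef
  have hAt : Aᵀ = A := by
    rw [hAdef, transpose_add, transpose_smul, transpose_smul, transpose_one, hPt]
  set W : Matrix (Fin m) (Fin m) ℝ := Xᵀ * A * X with hWdef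
  have hWt : Wᵀ = W := by
    rw [hWdef, transpose_mul, transpose_mul, transpose_transpose, hAt, ← Matrix.mul_assoc]
  have hW1 : W = κ • C + (1 - κ) • (B + C) := by
    have hBC : B + C = Xᵀ * X := by
      rw [hBdef, hCdef, Matrix.mul_sub, Matrix.mul_one, Matrix.sub_mul, sub_add_cancel]
    rw [hBC, hWdef, hAdef, hCdef]
    rw [Matrix.mul_add, Matrix.add_mul, Matrix.mul_smul, Matrix.smul_mul,
      Matrix.mul_smul, Matrix.smul_mul, Matrix.mul_one]
  have hsplit : ∀ v : Fin m → ℝ,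
      v ⬝ᵥ W *ᵥ v = (1 - κ) * (v ⬝ᵥ B *ᵥ v) + v ⬝ᵥ C *ᵥ v := by
    intro v
    rw [hW1]
    simp only [add_mulVec, smul_mulVec, dotProduct_add, dotProduct_smul, smul_eq_mul]
    ring
  have hWpos : ∀ v : Fin m → ℝ, v ≠ 0 → 0 < v ⬝ᵥ W *ᵥ v := by
    intro v hv
    have hBv : 0 < v ⬝ᵥ B *ᵥ v := by
      have := hBpd.dotProduct_mulVec_pos hv
      simpa using this
    have hCv := hRay v
    have hfac : 0 < (1 + lam - κ) * (v ⬝ᵥ B *ᵥ v) :=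
      mul_pos (by linarith) hBv
    rw [hsplit]
    nlinarith [hfac, hCv]
  have hWdet : IsUnit W.det := by
    have hWpd : W.PosDef := by
      refine Matrix.PosDef.of_dotProduct_mulVec_pos ?_ (fun x hx => ?_)
      · show Wᴴ = W
        rw [conjTranspose_eq_transpose_of_trivial, hWt]
      · have hstar : star x = x := by ext i; simp
        rw [hstar]
        exact hWpos x hx
    exact hWpd.det_pos.ne'.isUnit
  have hWβ : W *ᵥ βhat = (Xᵀ * A) *ᵥ y := by
    rw [hβhat, mulVec_mulVec, ← Matrix.mul_assoc, mul_nonsing_inv _ hWdet, Matrix.one_mul]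
  have hAform : ∀ β : Fin m → ℝ,
      f β = (y - X *ᵥ β) ⬝ᵥ A *ᵥ (y - X *ᵥ β) := by
    intro β
    rw [hf]
    set r := y - X *ᵥ β with hr
    have hPr : (P *ᵥ r) ⬝ᵥ (P *ᵥ r) = r ⬝ᵥ (P *ᵥ r) := by
      rw [adj_dot, hPt, mulVec_mulVec, hPidem]
    simp only [hAdef, add_mulVec, smul_mulVec, one_mulVec, dotProduct_add,
      dotProduct_smul, smul_eq_mul]
    rw [hPr]
  have hexpand : ∀ β : Fin m → ℝ,
      f β = (β - βhat) ⬝ᵥ W *ᵥ (β - βhat) + f βhat := by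
    intro β
    rw [hAform β, hAform βhat, hWdef]
    exact quad_expand A hAt X y βhat β hWβ
  exact strictconv W hWt hWpos f βhat (f βhat) hexpand
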